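/- In ℝ[x_1,x_2,x_3,x_4], let U = (1, Σ_{i=1}^4 x_i, Σ_{i=1}^4 x_i², Σ_{1≤i<j≤4} x_ix_j)^T and let Q be the 4×4 rational matrix (1/24)·[[1,-1,-1,2],[-1,2,0,-2],[-1,0,2,-2],[2,-2,-2,4]]. Then the exact polynomial identity U^T (24·Q) U = (1 - Σ_{i=1}^4 x_i - Σ_{i=1}^4 x_i² + 2Σ_{1≤i<j≤4} x_ix_j)² + (Σ_{i=1}^4 x_i² - Σ_{i=1}^4 x_i)² holds; in particular U^T (24·Q) U is a sum of two squares. -/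

import Mathlib

open MvPolynomial

/-- The representative vector `U = (1, Σ x_i, Σ x_i², Σ_{i<j} x_i x_j)` for the trivial
`S₄`-block. -/
noncomputable def Uvec : Fin 4 → MvPolynomial (Fin 4) ℝ :=
  ![1, ∑ i : Fin 4, X i, ∑ i : Fin 4, (X i) ^ 2,
    ∑ i : Fin 4, ∑ j ∈ Finset.Ioi i, X i * X j]

/-- The Gram matrix `Q_{(4)}` of the trivial `S₄`-block. -/
noncomputable def Qmat : Matrix (Fin 4) (Fin 4) ℝ :=
  (1 / 24 : ℝ) • !![1, -1, -1, 2; -1, 2, 0, -2; -1, 0, 2, -2; 2, -2, -2, 4]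

set_option maxHeartbeats 1000000 in
theorem trivial_block_factorization :
    (∑ a : Fin 4, ∑ b : Fin 4, C ((24 : ℝ) * Qmat a b) * Uvec a * Uvec b) =
      (1 - (∑ i : Fin 4, X i) - (∑ i : Fin 4, (X i) ^ 2)
          + 2 * ∑ i : Fin 4, ∑ j ∈ Finset.Ioi i, X i * X j) ^ 2
        + ((∑ i : Fin 4, (X i) ^ 2) - ∑ i : Fin 4, X i) ^ 2 := by
  unfold Uvec Qmat
  generalize (∑ i : Fin 4, ∑ j ∈ Finset.Ioi i, X i * X j : MvPolynomial (Fin 4) ℝ) = p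
  generalize (∑ i : Fin 4, X i : MvPolynomial (Fin 4) ℝ) = s
  generalize (∑ i : Fin 4, (X i)^2 : MvPolynomial (Fin 4) ℝ) = t
  simp only [Fin.sum_univ_four, Matrix.smul_apply, Matrix.cons_val_zero,
    Matrix.cons_val_one, Matrix.head_cons, Matrix.cons_val', Matrix.cons_val_fin_one,
    Matrix.empty_val', Matrix.head_fin_const, smul_eq_mul, Matrix.cons_val_two,
    Matrix.tail_cons, Matrix.cons_val_three, Matrix.cons_val]
  norm_num
  have h2 : (C (2:ℝ) : MvPolynomial (Fin 4) ℝ) = 2 := by simp [map_ofNat]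
  have h4 : (C (4:ℝ) : MvPolynomial (Fin 4) ℝ) = 4 := by simp [map_ofNat]
  simp only [map_one, map_neg, h2, h4]
  simp only [Matrix.cons_val_two, Matrix.cons_val_three, Matrix.vecHead, Matrix.vecTail, Function.comp, Fin.succ_zero_eq_one, Fin.succ_one_eq_two, Matrix.cons_val_zero, Matrix.cons_val_one, Matrix.cons_val_succ]
  norm_num [← map_mul]
  simp only [h2, h4]
  ring
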